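/- arXiv:1605.00302 — 2 statements merged into one kernel-verified Lean document; each statement's English description precedes it below -/
import Mathlib

section
/- The critical points of f(z,w) = z + w + w/z + 1/w on (ℂ*)^2, i.e. solutions of z - w/z = 0 and w + w/z - 1/w = 0, are in bijection with the roots of the polynomial p(z) = z^4 + z^3 - 1 via (z,w) ↦ z with inverse z ↦ (z, z^2). Moreover p has exactly 4 distinct complex roots (it is separable), so f has exactly 4 critical points. -/
open Complex Polynomial

noncomputable def P2 : ℂ[X] := X ^ 4 + X ^ 3 - 1

lemma P2_natDegree : P2.natDegree = 4 := by
  unfold P2; compute_degree!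

lemma P2_ne_zero : P2 ≠ 0 := by
  intro h
  have := P2_natDegree
  rw [h] at this
  simp at this

lemma C283 : ((283 : ℂ[X])) = C (283 : ℂ) := by
  norm_cast

lemma P2_sep : P2.Separable := by
  have hd : derivative P2 = 4 * X ^ 3 + 3 * X ^ 2 := by
    unfold P2
    simp [derivative_pow, map_ofNat]
  refine ⟨C (283 : ℂ)⁻¹ * (48 * X ^ 2 - 283),
          C (283 : ℂ)⁻¹ * (16 + 73 * X - 3 * X ^ 2 - 12 * X ^ 3), ?_⟩
  rw [hd]
  have key : (48 * X ^ 2 - 283) * P2 +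
      (16 + 73 * X - 3 * X ^ 2 - 12 * X ^ 3) * (4 * X ^ 3 + 3 * X ^ 2)
      = (283 : ℂ[X]) := by
    unfold P2; ring
  have h1 : C (283 : ℂ)⁻¹ * (48 * X ^ 2 - 283) * P2 +
      C (283 : ℂ)⁻¹ * (16 + 73 * X - 3 * X ^ 2 - 12 * X ^ 3) *
        (4 * X ^ 3 + 3 * X ^ 2)
      = C (283 : ℂ)⁻¹ * 283 := by
    linear_combination (C (283 : ℂ)⁻¹) * key
  rw [h1, C283, ← C_mul, inv_mul_cancel₀ (by norm_num), C_1]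

lemma roots_card : Set.ncard {z : ℂ | z ^ 4 + z ^ 3 - 1 = 0} = 4 := by
  have hset : {z : ℂ | z ^ 4 + z ^ 3 - 1 = 0} = P2.rootSet ℂ := by
    ext z
    rw [Set.mem_setOf_eq, Polynomial.mem_rootSet]
    constructor
    · intro h
      exact ⟨P2_ne_zero, by simp [P2]; linear_combination h⟩
    · intro ⟨_, h⟩
      simp [P2] at h
      linear_combination h
  rw [hset]
  have := Polynomial.card_rootSet_eq_natDegree (K := ℂ) P2_sep
    (IsAlgClosed.splits _)
  rw [Set.ncard_eq_toFinset_card', Set.toFinset_card, this, P2_natDegree]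

/-- critical points of the LG-potential of the Hirzebruch surface
`ℙ(O ⊕ O(1))` biject with the roots of `z^4 + z^3 - 1`, of which there are exactly 4. -/
theorem stmt_2 :
    (∀ z w : ℂ, z ≠ 0 → w ≠ 0 → z - w / z = 0 → w + w / z - 1 / w = 0 →
      z ^ 4 + z ^ 3 - 1 = 0 ∧ w = z ^ 2) ∧
    (∀ z : ℂ, z ^ 4 + z ^ 3 - 1 = 0 →
      z ≠ 0 ∧ z ^ 2 ≠ 0 ∧ z - z ^ 2 / z = 0 ∧ z ^ 2 + z ^ 2 / z - 1 / z ^ 2 = 0) ∧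
    Set.ncard {z : ℂ | z ^ 4 + z ^ 3 - 1 = 0} = 4 ∧
    Set.ncard {p : ℂ × ℂ | p.1 ≠ 0 ∧ p.2 ≠ 0 ∧ p.1 - p.2 / p.1 = 0 ∧
      p.2 + p.2 / p.1 - 1 / p.2 = 0} = 4 := by
  have fwd : ∀ z w : ℂ, z ≠ 0 → w ≠ 0 → z - w / z = 0 → w + w / z - 1 / w = 0 →
      z ^ 4 + z ^ 3 - 1 = 0 ∧ w = z ^ 2 := by
    intro z w hz hw h1 h2
    have hw2 : w = z ^ 2 := by
      field_simp at h1
      linear_combination -h1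
    subst hw2
    refine ⟨?_, rfl⟩
    field_simp at h2
    have h3 : z * (z ^ 4 + z ^ 3 - 1) = 0 := by linear_combination z * h2
    exact (mul_eq_zero.mp h3).resolve_left hz
  have bwd : ∀ z : ℂ, z ^ 4 + z ^ 3 - 1 = 0 →
      z ≠ 0 ∧ z ^ 2 ≠ 0 ∧ z - z ^ 2 / z = 0 ∧ z ^ 2 + z ^ 2 / z - 1 / z ^ 2 = 0 := by
    intro z hz
    have h0 : z ≠ 0 := by
      rintro rfl
      norm_num at hz
    refine ⟨h0, pow_ne_zero _ h0, ?_, ?_⟩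
    · rw [sq, mul_div_assoc, div_self h0, mul_one, sub_self]
    · have hrw : z ^ 2 + z ^ 2 / z - 1 / z ^ 2 = (z ^ 4 + z ^ 3 - 1) / z ^ 2 := by
        field_simp
      rw [hrw, hz, zero_div]
  refine ⟨fwd, bwd, roots_card, ?_⟩
  have himg : {p : ℂ × ℂ | p.1 ≠ 0 ∧ p.2 ≠ 0 ∧ p.1 - p.2 / p.1 = 0 ∧
      p.2 + p.2 / p.1 - 1 / p.2 = 0} =
      (fun z : ℂ => (z, z ^ 2)) '' {z : ℂ | z ^ 4 + z ^ 3 - 1 = 0} := by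
    ext ⟨z, w⟩
    simp only [Set.mem_setOf_eq, Set.mem_image, Prod.mk.injEq]
    constructor
    · rintro ⟨hz, hw, h1, h2⟩
      obtain ⟨hp, hw2⟩ := fwd z w hz hw h1 h2
      exact ⟨z, hp, rfl, hw2.symm⟩
    · rintro ⟨x, hx, rfl, rfl⟩
      obtain ⟨h0, h1, h2, h3⟩ := bwd x hx
      exact ⟨h0, h1, h2, h3⟩
  rw [himg, Set.ncard_image_of_injective _ (fun a b h => (Prod.mk.injEq _ _ _ _ ▸ h).1),
    roots_card]
end

section
/- Let n ≥ 2 and b ∈ ℤ. The set of solutions (z, w) ∈ (ℂ*)^2 of the system { -1/(z^{n-1} w^b) + i/(z^{n-1} w^{b+1}) = 0 , -b/(z^{n-1} w^b) + (b+1)i/(z^{n-1} w^{b+1}) - 1/w = 0 } is exactly { (z, i) : z^{n-1} = -i^{-(b+1)} }, and it has exactly n-1 elements. -/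
open Complex

/-- the limiting branch of the LG-system of
`X_{n,b} = Bl_{ℙ^{n-2}}(ℙ(O ⊕ O(b)))` (Proposition 3.3.1): `w = i` and
`z^{n-1} = -i^{-(b+1)}`, giving exactly `n-1` solutions. -/
theorem stmt_11 (n : ℕ) (hn : 2 ≤ n) (b : ℤ) :
    {p : ℂ × ℂ | p.1 ≠ 0 ∧ p.2 ≠ 0 ∧
        -1 / (p.1 ^ (n - 1) * p.2 ^ b) + Complex.I / (p.1 ^ (n - 1) * p.2 ^ (b + 1)) = 0 ∧
        -(b : ℂ) / (p.1 ^ (n - 1) * p.2 ^ b)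
          + ((b : ℂ) + 1) * Complex.I / (p.1 ^ (n - 1) * p.2 ^ (b + 1)) - 1 / p.2 = 0}
      = {p : ℂ × ℂ | p.2 = Complex.I ∧ p.1 ^ (n - 1) = -(Complex.I ^ (-(b + 1)))} ∧
    Set.ncard {p : ℂ × ℂ | p.2 = Complex.I ∧ p.1 ^ (n - 1) = -(Complex.I ^ (-(b + 1)))}
      = n - 1 := by
  have hm : n - 1 ≠ 0 := by omega
  have hI : (Complex.I : ℂ) ≠ 0 := I_ne_zero
  have hIb : (Complex.I : ℂ) ^ b ≠ 0 := zpow_ne_zero _ hI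
  -- the target value
  have hc : -(Complex.I ^ (-(b + 1)) : ℂ) = Complex.I * (Complex.I ^ b)⁻¹ := by
    rw [zpow_neg, zpow_add_one₀ hI, mul_inv, inv_I]
    ring
  have hc0 : -(Complex.I ^ (-(b + 1)) : ℂ) ≠ 0 := by
    rw [hc]; exact mul_ne_zero hI (inv_ne_zero hIb)
  constructor
  · ext ⟨z, w⟩
    simp only [Set.mem_setOf_eq]
    constructor
    · rintro ⟨hz, hw, h1, h2⟩
      have hzm : z ^ (n - 1) ≠ 0 := pow_ne_zero _ hz
      have hwb : w ^ b ≠ 0 := zpow_ne_zero _ hw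
      rw [zpow_add_one₀ hw] at h1 h2
      field_simp at h1
      have hwImul : z ^ (n - 1) * w ^ b * (Complex.I - w) = 0 := by linear_combination (z ^ (n - 1) * w ^ b) * h1
      have hwI : w = Complex.I := by
        rcases mul_eq_zero.mp hwImul with h | h
        · exact absurd h (mul_ne_zero hzm hwb)
        · exact (sub_eq_zero.mp h).symm
      subst hwI
      refine ⟨rfl, ?_⟩
      rw [hc]
      field_simp at h2
      have hX : z ^ (n - 1) * Complex.I ^ b * (Complex.I - z ^ (n - 1) * Complex.I ^ b) = 0 := by
        linear_combination (z ^ (n - 1) * Complex.I ^ b) * h2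
      rcases mul_eq_zero.mp hX with h | h
      · exact absurd h (mul_ne_zero hzm hIb)
      · have hXI : z ^ (n - 1) * Complex.I ^ b = Complex.I := (sub_eq_zero.mp h).symm
        exact (eq_mul_inv_iff_mul_eq₀ hIb).mpr hXI
    · rintro ⟨hw, hz⟩
      subst hw
      have hz0 : z ≠ 0 := by
        intro h
        rw [h, zero_pow hm] at hz
        exact hc0 hz.symm
      have hzm : z ^ (n - 1) ≠ 0 := pow_ne_zero _ hz0
      rw [hc] at hz
      refine ⟨hz0, hI, ?_, ?_⟩
      · rw [hz, zpow_add_one₀ hI]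
        field_simp
        ring_nf
      · rw [hz, zpow_add_one₀ hI]
        field_simp
        ring_nf
  · have himg : {p : ℂ × ℂ | p.2 = Complex.I ∧ p.1 ^ (n - 1) = -(Complex.I ^ (-(b + 1)))}
        = (fun z => (z, Complex.I)) '' {z : ℂ | z ^ (n - 1) = -(Complex.I ^ (-(b + 1)))} := by
      ext ⟨z, w⟩
      constructor
      · rintro ⟨rfl, h⟩; exact ⟨z, h, rfl⟩
      · rintro ⟨y, h, heq⟩
        obtain ⟨rfl, rfl⟩ := Prod.mk.injEq .. ▸ heq
        exact ⟨rfl, h⟩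
    have hinj : Function.Injective (fun z : ℂ => (z, Complex.I)) := fun a b h =>
      congrArg Prod.fst h
    rw [himg, Set.ncard_image_of_injective _ hinj]
    have hζ := Complex.isPrimitiveRoot_exp (n - 1) hm
    have hset : {z : ℂ | z ^ (n - 1) = -(Complex.I ^ (-(b + 1)))}
        = ((Polynomial.nthRoots (n - 1) (-(Complex.I ^ (-(b + 1))) : ℂ)).toFinset : Set ℂ) := by
      ext z
      simp [Polynomial.mem_nthRoots (Nat.pos_of_ne_zero hm)]
    rw [hset, Set.ncard_coe_finset, Multiset.toFinset_card_of_nodup (hζ.nthRoots_nodup hc0),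
      hζ.card_nthRoots, if_pos (IsAlgClosed.exists_pow_nat_eq _ (Nat.pos_of_ne_zero hm))]
end
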